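/- Let m ≥ 1, x̄ ∈ ℝ^{m+1} with d := ‖x̄‖ > 0, r > 0, h ≥ 0, and let 𝕊^m_{r,h} := {(y,h) ∈ ℝ^{m+1} × ℝ : ‖y − x̄‖ = r} ⊂ ℝ^{m+2}. Then 0 ∈ 𝕊^m_{r,h} if and only if h = 0 and r = d. Consequently, if (r,h) ≠ (d,0), then 𝕊^m_{r,h} ⊂ ℝ^{m+2} ∖ {0}, and its preimage M^m_{r,h} := φ^{-1}(𝕊^m_{r,h}) under the homeomorphism φ : 𝕊^{m+1} × ℝ → ℝ^{m+2} ∖ {0}, φ(x,t) = e^t·x, is a compact subset of 𝕊^{m+1} × ℝ homeomorphic to the m-sphere 𝕊^m. -/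

import Mathlib

def stmt17ProjLast (n : ℕ) :
    EuclideanSpace ℝ (Fin (n + 1)) →ₗ[ℝ] EuclideanSpace ℝ (Fin n) where
  toFun w := WithLp.toLp 2 (fun i => w (Fin.castSucc i))
  map_add' w v := by ext i; simp
  map_smul' a w := by ext i; simp

def stmt17Incl (n : ℕ) (u : EuclideanSpace ℝ (Fin n)) :
    EuclideanSpace ℝ (Fin (n + 1)) :=
  WithLp.toLp 2 (fun i => Fin.lastCases (motive := fun _ => ℝ) 0 (fun j => u j) i)

lemma stmt17Incl_last (n : ℕ) (u : EuclideanSpace ℝ (Fin n)) :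
    stmt17Incl n u (Fin.last n) = 0 := by
  simp [stmt17Incl]

lemma stmt17_proj_incl (n : ℕ) (u : EuclideanSpace ℝ (Fin n)) :
    stmt17ProjLast n (stmt17Incl n u) = u := by
  ext i
  simp [stmt17ProjLast, stmt17Incl]

lemma stmt17_norm_proj (n : ℕ) (w : EuclideanSpace ℝ (Fin (n + 1)))
    (hw : w (Fin.last n) = 0) : ‖stmt17ProjLast n w‖ = ‖w‖ := by
  rw [EuclideanSpace.norm_eq, EuclideanSpace.norm_eq, Fin.sum_univ_castSucc, hw]
  simp [stmt17ProjLast]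

lemma stmt17_eq_of_proj_eq (n : ℕ) (w v : EuclideanSpace ℝ (Fin (n + 1)))
    (hw : w (Fin.last n) = v (Fin.last n))
    (hp : stmt17ProjLast n w = stmt17ProjLast n v) : w = v := by
  ext i
  induction i using Fin.lastCases with
  | last => exact hw
  | cast j => simpa [stmt17ProjLast] using congrArg (fun x => x j) hp

set_option synthInstance.maxHeartbeats 1000000 in
/-- Let `m ≥ 1`, let `x̄ ∈ ℝ^{m+1} ⊂ ℝ^{m+2}` (last coordinate `0`) with
`d = ‖x̄‖ > 0`, `r > 0`, `h ≥ 0`, and let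
`𝕊^m_{r,h} = {z ∈ ℝ^{m+2} : z_{last} = h, ‖z − (x̄ + h e_{last})‖ = r}`.  Then
`0 ∈ 𝕊^m_{r,h} ↔ h = 0 ∧ r = d`.  Consequently, if `(r,h) ≠ (d,0)`, then
`𝕊^m_{r,h} ⊆ ℝ^{m+2} ∖ {0}` and its preimage `M^m_{r,h}` under the homeomorphism
`φ : 𝕊^{m+1} × ℝ → ℝ^{m+2} ∖ {0}`, `φ(x,t) = e^t x`, is compact and homeomorphic
to the `m`-sphere `𝕊^m`. -/
theorem stmt_17 (m : ℕ) (hm : 1 ≤ m)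
    (xbar : EuclideanSpace ℝ (Fin (m + 2)))
    (hlast : xbar (Fin.last (m + 1)) = 0)
    (hd : 0 < ‖xbar‖) (r h : ℝ) (hr : 0 < r) (hh : 0 ≤ h)
    (S : Set (EuclideanSpace ℝ (Fin (m + 2))))
    (hS : S = {z : EuclideanSpace ℝ (Fin (m + 2)) | z (Fin.last (m + 1)) = h ∧
        ‖z - (xbar + h • EuclideanSpace.single (Fin.last (m + 1)) (1 : ℝ))‖ = r}) :
    ((0 : EuclideanSpace ℝ (Fin (m + 2))) ∈ S ↔ h = 0 ∧ r = ‖xbar‖) ∧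
    ((r, h) ≠ (‖xbar‖, 0) →
      (0 : EuclideanSpace ℝ (Fin (m + 2))) ∉ S ∧
      IsCompact {pt : Metric.sphere (0 : EuclideanSpace ℝ (Fin (m + 2))) 1 × ℝ |
          Real.exp pt.2 • (pt.1 : EuclideanSpace ℝ (Fin (m + 2))) ∈ S} ∧
      Nonempty
        ({pt : Metric.sphere (0 : EuclideanSpace ℝ (Fin (m + 2))) 1 × ℝ |
            Real.exp pt.2 • (pt.1 : EuclideanSpace ℝ (Fin (m + 2))) ∈ S} ≃ₜ
          Metric.sphere (0 : EuclideanSpace ℝ (Fin (m + 1))) 1)) := by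
  set c : EuclideanSpace ℝ (Fin (m + 2)) :=
    xbar + h • EuclideanSpace.single (Fin.last (m + 1)) (1 : ℝ) with hc
  have hzero : (0 : EuclideanSpace ℝ (Fin (m + 2))) (Fin.last (m + 1)) = 0 := rfl
  -- the iff
  have hiff : (0 : EuclideanSpace ℝ (Fin (m + 2))) ∈ S ↔ h = 0 ∧ r = ‖xbar‖ := by
    rw [hS]
    constructor
    · rintro ⟨h1, h2⟩
      have hh0 : h = 0 := by rw [← h1]; rfl
      refine ⟨hh0, ?_⟩
      rw [← h2, hc, hh0]
      simp
    · rintro ⟨hh0, hrd⟩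
      subst hh0
      refine ⟨rfl, ?_⟩
      rw [hc]
      simp [hrd]
  refine ⟨hiff, fun hne => ?_⟩
  have h0S : (0 : EuclideanSpace ℝ (Fin (m + 2))) ∉ S := by
    intro h0
    obtain ⟨hh0, hrd⟩ := hiff.mp h0
    exact hne (by rw [hh0, hrd])
  refine ⟨h0S, ?_⟩
  -- S is compact
  have hSclosed : IsClosed S := by
    rw [hS]
    have h1 : IsClosed {z : EuclideanSpace ℝ (Fin (m + 2)) | z (Fin.last (m + 1)) = h} :=
      isClosed_eq ((EuclideanSpace.proj (Fin.last (m + 1)) :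
        EuclideanSpace ℝ (Fin (m + 2)) →L[ℝ] ℝ).continuous) continuous_const
    have h2 : IsClosed {z : EuclideanSpace ℝ (Fin (m + 2)) | ‖z - c‖ = r} :=
      isClosed_eq ((continuous_id.sub continuous_const).norm) continuous_const
    exact h1.inter h2
  have hSbdd : Bornology.IsBounded S := by
    apply Bornology.IsBounded.subset (Metric.isBounded_closedBall (x := c) (r := r))
    rw [hS]
    rintro z ⟨-, hz2⟩
    simpa [Metric.mem_closedBall, dist_eq_norm] using hz2.le
  have hScomp : IsCompact S := Metric.isCompact_of_isClosed_isBounded hSclosed hSbdd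
  set M : Set (Metric.sphere (0 : EuclideanSpace ℝ (Fin (m + 2))) 1 × ℝ) :=
    {pt | Real.exp pt.2 • (pt.1 : EuclideanSpace ℝ (Fin (m + 2))) ∈ S} with hM
  -- nonvanishing on S
  have hSne : ∀ z ∈ S, z ≠ 0 := fun z hz h0 => h0S (h0 ▸ hz)
  have hSnorm : ∀ z ∈ S, (0 : ℝ) < ‖z‖ := fun z hz => norm_pos_iff.mpr (hSne z hz)
  -- the inverse map ψ
  have hmemsph : ∀ z : EuclideanSpace ℝ (Fin (m + 2)), z ≠ 0 →
      ‖z‖⁻¹ • z ∈ Metric.sphere (0 : EuclideanSpace ℝ (Fin (m + 2))) 1 := by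
    intro z hz
    rw [Metric.mem_sphere, dist_zero_right]
    exact norm_smul_inv_norm hz
  have hMim : M = (fun z : S =>
      ((⟨‖(z : EuclideanSpace ℝ (Fin (m + 2)))‖⁻¹ • (z : EuclideanSpace ℝ (Fin (m + 2))),
        hmemsph _ (hSne _ z.2)⟩ : Metric.sphere (0 : EuclideanSpace ℝ (Fin (m + 2))) 1),
        Real.log ‖(z : EuclideanSpace ℝ (Fin (m + 2)))‖)) '' Set.univ := by
    ext ⟨x, t⟩
    simp only [hM, Set.mem_setOf_eq, Set.image_univ, Set.mem_range]
    constructor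
    · intro hmem
      refine ⟨⟨Real.exp t • (x : EuclideanSpace ℝ (Fin (m + 2))), hmem⟩, ?_⟩
      have hx1 : ‖(x : EuclideanSpace ℝ (Fin (m + 2)))‖ = 1 := by
        have := x.2
        rwa [Metric.mem_sphere, dist_zero_right] at this
      have hn : ‖Real.exp t • (x : EuclideanSpace ℝ (Fin (m + 2)))‖ = Real.exp t := by
        rw [norm_smul, hx1, Real.norm_eq_abs, abs_of_pos (Real.exp_pos t), mul_one]
      have e1 : ‖Real.exp t • (x : EuclideanSpace ℝ (Fin (m + 2)))‖⁻¹ •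
          (Real.exp t • (x : EuclideanSpace ℝ (Fin (m + 2)))) = (x : _) := by
        rw [hn, smul_smul, inv_mul_cancel₀ (Real.exp_pos t).ne', one_smul]
      have e2 : Real.log ‖Real.exp t • (x : EuclideanSpace ℝ (Fin (m + 2)))‖ = t := by
        rw [hn, Real.log_exp]
      exact Prod.ext (Subtype.ext e1) e2
    · rintro ⟨z, hz⟩
      obtain ⟨hz1, hz2⟩ := Prod.mk.injEq .. ▸ hz
      have hx : (x : EuclideanSpace ℝ (Fin (m + 2))) =
          ‖(z : EuclideanSpace ℝ (Fin (m + 2)))‖⁻¹ • (z : EuclideanSpace ℝ (Fin (m + 2))) := by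
        rw [← hz1]
      have hzpos := hSnorm _ z.2
      rw [hx, ← hz2, Real.exp_log hzpos, smul_smul, mul_inv_cancel₀ hzpos.ne', one_smul]
      exact z.2
  have hMcomp : IsCompact M := by
    rw [hMim]
    have : CompactSpace S := isCompact_iff_compactSpace.mp hScomp
    apply IsCompact.image isCompact_univ
    refine Continuous.prodMk (Continuous.subtype_mk ?_ _) ?_
    · exact ((continuous_subtype_val.norm.inv₀
        (fun z => (hSnorm _ z.2).ne')).smul continuous_subtype_val)
    · exact (continuous_subtype_val.norm).log (fun z => (hSnorm _ z.2).ne')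
  refine ⟨hMcomp, ?_⟩
  -- the forward map f : M → sphere
  have hCS : CompactSpace M := isCompact_iff_compactSpace.mp hMcomp
  have hSlast : ∀ z ∈ S, (z - c) (Fin.last (m + 1)) = 0 := by
    intro z hz
    rw [hS] at hz
    have hcl : c (Fin.last (m + 1)) = h := by
      rw [hc]
      simp [hlast]
    show z (Fin.last (m + 1)) - c (Fin.last (m + 1)) = 0
    rw [hz.1, hcl, sub_self]
  have fmem : ∀ pt : M, r⁻¹ • stmt17ProjLast (m + 1)
      (Real.exp pt.1.2 • (pt.1.1 : EuclideanSpace ℝ (Fin (m + 2))) - c) ∈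
      Metric.sphere (0 : EuclideanSpace ℝ (Fin (m + 1))) 1 := by
    rintro ⟨⟨x, t⟩, hpt⟩
    have hz : Real.exp t • (x : EuclideanSpace ℝ (Fin (m + 2))) ∈ S := hpt
    rw [Metric.mem_sphere, dist_zero_right, norm_smul, Real.norm_eq_abs,
      abs_of_pos (inv_pos.mpr hr), stmt17_norm_proj _ _ (hSlast _ hz)]
    have hz2 : ‖Real.exp t • (x : EuclideanSpace ℝ (Fin (m + 2))) - c‖ = r := by
      rw [hS] at hz; exact hz.2
    rw [hz2, inv_mul_cancel₀ hr.ne']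
  set f : M → Metric.sphere (0 : EuclideanSpace ℝ (Fin (m + 1))) 1 :=
    fun pt => ⟨r⁻¹ • stmt17ProjLast (m + 1)
      (Real.exp pt.1.2 • (pt.1.1 : EuclideanSpace ℝ (Fin (m + 2))) - c),
      fmem pt⟩ with hf
  have hfcont : Continuous f := by
    apply Continuous.subtype_mk
    show Continuous (r⁻¹ • fun pt : M => stmt17ProjLast (m + 1)
      (Real.exp pt.1.2 • (pt.1.1 : EuclideanSpace ℝ (Fin (m + 2))) - c))
    apply Continuous.const_smul
    have hPc : Continuous (stmt17ProjLast (m + 1)) :=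
      LinearMap.continuous_of_finiteDimensional _
    apply hPc.comp
    apply Continuous.sub _ continuous_const
    exact ((Real.continuous_exp.comp (continuous_snd.comp continuous_subtype_val)).smul
      (continuous_subtype_val.comp (continuous_fst.comp continuous_subtype_val)))
  have hfinj : Function.Injective f := by
    rintro ⟨⟨x1, t1⟩, hp1⟩ ⟨⟨x2, t2⟩, hp2⟩ heq
    have hz1 : Real.exp t1 • (x1 : EuclideanSpace ℝ (Fin (m + 2))) ∈ S := hp1
    have hz2 : Real.exp t2 • (x2 : EuclideanSpace ℝ (Fin (m + 2))) ∈ S := hp2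
    have heq' : stmt17ProjLast (m + 1) (Real.exp t1 • (x1 : EuclideanSpace ℝ (Fin (m + 2))) - c)
        = stmt17ProjLast (m + 1) (Real.exp t2 • (x2 : EuclideanSpace ℝ (Fin (m + 2))) - c) := by
      have := congrArg Subtype.val heq
      simp only [hf] at this
      exact smul_right_injective _ (inv_ne_zero hr.ne') this
    have hzz : Real.exp t1 • (x1 : EuclideanSpace ℝ (Fin (m + 2)))
        = Real.exp t2 • (x2 : EuclideanSpace ℝ (Fin (m + 2))) := by
      have := stmt17_eq_of_proj_eq (m + 1) _ _
        ((hSlast _ hz1).trans (hSlast _ hz2).symm) heq'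
      have := congrArg (· + c) this
      simpa using this
    have hx1n : ‖(x1 : EuclideanSpace ℝ (Fin (m + 2)))‖ = 1 := by
      have := x1.2; rwa [Metric.mem_sphere, dist_zero_right] at this
    have hx2n : ‖(x2 : EuclideanSpace ℝ (Fin (m + 2)))‖ = 1 := by
      have := x2.2; rwa [Metric.mem_sphere, dist_zero_right] at this
    have ht : t1 = t2 := by
      have := congrArg norm hzz
      rw [norm_smul, norm_smul, hx1n, hx2n, Real.norm_eq_abs, Real.norm_eq_abs,
        abs_of_pos (Real.exp_pos t1), abs_of_pos (Real.exp_pos t2), mul_one, mul_one] at this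
      exact Real.exp_injective this
    subst ht
    have hx : x1 = x2 := by
      apply Subtype.ext
      exact smul_right_injective _ (Real.exp_pos t1).ne' hzz
    subst hx
    rfl
  have hfsurj : Function.Surjective f := by
    rintro ⟨u, hu⟩
    rw [Metric.mem_sphere, dist_zero_right] at hu
    set z : EuclideanSpace ℝ (Fin (m + 2)) := c + r • stmt17Incl (m + 1) u with hzdef
    have hzS : z ∈ S := by
      rw [hS]
      constructor
      · show c (Fin.last (m + 1)) + r * stmt17Incl (m + 1) u (Fin.last (m + 1)) = h
        rw [stmt17Incl_last, mul_zero, add_zero, hc]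
        simp [hlast]
      · show ‖c + r • stmt17Incl (m + 1) u - c‖ = r
        rw [add_sub_cancel_left, norm_smul, Real.norm_eq_abs, abs_of_pos hr]
        have : ‖stmt17Incl (m + 1) u‖ = 1 := by
          rw [← stmt17_norm_proj _ _ (stmt17Incl_last _ u), stmt17_proj_incl, hu]
        rw [this, mul_one]
    have hzpos : (0 : ℝ) < ‖z‖ := hSnorm _ hzS
    refine ⟨⟨(⟨‖z‖⁻¹ • z, hmemsph _ (hSne _ hzS)⟩, Real.log ‖z‖), ?_⟩, ?_⟩
    · show Real.exp (Real.log ‖z‖) • (‖z‖⁻¹ • z) ∈ S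
      rw [Real.exp_log hzpos, smul_smul, mul_inv_cancel₀ hzpos.ne', one_smul]
      exact hzS
    · apply Subtype.ext
      show r⁻¹ • stmt17ProjLast (m + 1) (Real.exp (Real.log ‖z‖) • (‖z‖⁻¹ • z) - c) = u
      rw [Real.exp_log hzpos, smul_smul, mul_inv_cancel₀ hzpos.ne', one_smul, hzdef,
        add_sub_cancel_left, map_smul, stmt17_proj_incl, smul_smul,
        inv_mul_cancel₀ hr.ne', one_smul]
  exact ⟨(Continuous.homeoOfEquivCompactToT2 (f := Equiv.ofBijective f ⟨hfinj, hfsurj⟩) hfcont)⟩
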